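/- Let (W,S) be a Coxeter system acting on the geometric representation V = ⊕_{s∈S} ℝα_s^∨ with simple roots α_s, and let I ⊆ S with Δ_I = {α_r : r ∈ I} and Φ_I the set of roots lying in the span of Δ_I. For x ∈ ᴵW and s ∈ S, the following are equivalent: (i) xs ∉ ᴵW; (ii) x(α_s) ∈ Δ_I; (iii) x(α_s) ∈ Φ_I. -/

import Mathlib

/-- The set of minimal length representatives for the right cosets `W_I \ W`. -/
def minCosetReps {B W : Type*} [Group W] {M : CoxeterMatrix B} (cs : CoxeterSystem M W)
    (I : Set B) : Set W :=
  {w : W | ∀ i ∈ I, cs.length w < cs.length (cs.simple i * w)}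

/-- The coefficients of the standard bilinear form of the geometric representation:
`B(α_i, α_j) = -cos (π / m_{ij})`, with the convention `π/∞ = 0` (here `m_{ij} = 0`
encodes `∞`). -/
noncomputable def geomK {B : Type*} (M : CoxeterMatrix B) (i j : B) : ℝ :=
  if M i j = 0 then -1 else -Real.cos (Real.pi / (M i j : ℝ))

/-- The pairing `B(v, α_i)` of a vector of the geometric representation with
the simple root `α_i`. -/
noncomputable def geomPair {B : Type*} (M : CoxeterMatrix B) (v : B →₀ ℝ) (i : B) : ℝ :=
  v.sum fun j a => a * geomK M j i

namespace Stmt2Aux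

open CoxeterSystem

variable {B : Type*} {M : CoxeterMatrix B}

/-- Chebyshev-like sequence: `S 0 = 0`, `S 1 = 1`, `S (n+2) = 2c S(n+1) - S n`. -/
noncomputable def chebS (c : ℝ) : ℕ → ℝ
  | 0 => 0
  | 1 => 1
  | (n+2) => 2*c*chebS c (n+1) - chebS c n

theorem chebS_zero (c : ℝ) : chebS c 0 = 0 := rfl
theorem chebS_one' (c : ℝ) : chebS c 1 = 1 := rfl
theorem chebS_rec (c : ℝ) (n : ℕ) : chebS c (n+2) = 2*c*chebS c (n+1) - chebS c n := rfl

theorem chebS_sin (θ : ℝ) (n : ℕ) :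
    Real.sin θ * chebS (Real.cos θ) n = Real.sin (n * θ) := by
  induction n using Nat.strong_induction_on with
  | _ n ih =>
    match n with
    | 0 => simp [chebS]
    | 1 => simp [chebS]
    | (n+2) =>
      have h1 := ih (n+1) (by omega)
      have h0 := ih n (by omega)
      rw [chebS_rec]
      have e2 : ((n:ℝ)+2) * θ = ((n+1:ℕ):ℝ) * θ + θ := by push_cast; ring
      have e0 : (n:ℝ) * θ = ((n+1:ℕ):ℝ) * θ - θ := by push_cast; ring
      push_cast
      rw [e2, Real.sin_add]
      have hs := Real.sin_sub (((n:ℝ)+1) * θ) θ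
      push_cast at h1 h0 e0 ⊢
      rw [e0, hs] at h0
      linear_combination 2*Real.cos θ*h1 - h0

theorem chebS_one (n : ℕ) : chebS 1 n = n := by
  induction n using Nat.strong_induction_on with
  | _ n ih =>
    match n with
    | 0 => simp [chebS]
    | 1 => simp [chebS]
    | (n+2) =>
      rw [chebS_rec, ih (n+1) (by omega), ih n (by omega)]
      push_cast; ring


theorem geomK_symm (M : CoxeterMatrix B) (i j : B) : geomK M i j = geomK M j i := by
  unfold geomK; rw [M.symmetric i j]

theorem geomK_diag (M : CoxeterMatrix B) (i : B) : geomK M i i = 1 := by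
  unfold geomK
  rw [M.diagonal i]
  norm_num

theorem geomPair_single (M : CoxeterMatrix B) (j : B) (a : ℝ) (i : B) :
    geomPair M (Finsupp.single j a) i = a * geomK M j i := by
  unfold geomPair
  rw [Finsupp.sum_single_index]
  simp

/-- The bilinear form, as a bilinear map. -/
noncomputable def BfL (M : CoxeterMatrix B) : (B →₀ ℝ) →ₗ[ℝ] (B →₀ ℝ) →ₗ[ℝ] ℝ :=
  Finsupp.linearCombination ℝ (fun j => Finsupp.linearCombination ℝ (fun i => geomK M j i))

theorem BfL_single_single (j i : B) (a b : ℝ) :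
    BfL M (Finsupp.single j a) (Finsupp.single i b) = a * (b * geomK M j i) := by
  unfold BfL
  rw [Finsupp.linearCombination_single]
  simp [Finsupp.linearCombination_single, smul_eq_mul, mul_assoc]

theorem geomPair_eq (v : B →₀ ℝ) (i : B) :
    geomPair M v i = Finsupp.linearCombination ℝ (fun j => geomK M j i) v := by
  rw [Finsupp.linearCombination_apply]
  simp [geomPair, smul_eq_mul]

theorem geomPair_eq_BfL (v : B →₀ ℝ) (i : B) :
    geomPair M v i = BfL M v (Finsupp.single i 1) := by
  induction v using Finsupp.induction_linear with
  | zero => simp [geomPair_eq]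
  | add f g hf hg => simp only [geomPair_eq, map_add, LinearMap.add_apply] at *; rw [hf, hg]
  | single j a => rw [geomPair_single, BfL_single_single]; ring

theorem BfL_symm (u v : B →₀ ℝ) : BfL M u v = BfL M v u := by
  induction u using Finsupp.induction_linear with
  | zero => simp
  | add f g hf hg => simp [map_add, hf, hg]
  | single j a =>
    induction v using Finsupp.induction_linear with
    | zero => simp
    | add f g hf hg => simp [map_add, hf, hg]
    | single i b => rw [BfL_single_single, BfL_single_single, geomK_symm]; ring

section Rep

variable {W : Type*} [Group W] (cs : CoxeterSystem M W)
  (ρ : W →* ((B →₀ ℝ) ≃ₗ[ℝ] (B →₀ ℝ)))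

theorem lequiv_mul_apply (e₁ e₂ : (B →₀ ℝ) ≃ₗ[ℝ] (B →₀ ℝ)) (x : B →₀ ℝ) :
    (e₁ * e₂) x = e₁ (e₂ x) := rfl

variable (hρ : ∀ (i : B) (v : B →₀ ℝ),
      ρ (cs.simple i) v = v - (2 * geomPair M v i) • Finsupp.single i 1)

include hρ

theorem rho_simple_single (t s : B) :
    ρ (cs.simple t) (Finsupp.single s 1) =
      Finsupp.single s 1 - (2 * geomK M s t) • Finsupp.single t 1 := by
  rw [hρ, geomPair_single, one_mul]

theorem rho_simple_single_self (i : B) :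
    ρ (cs.simple i) (Finsupp.single i 1) = -Finsupp.single i 1 := by
  rw [rho_simple_single cs ρ hρ, geomK_diag, mul_one, two_smul]
  abel

theorem BfL_reflect (i : B) (u v : B →₀ ℝ) :
    BfL M (ρ (cs.simple i) u) (ρ (cs.simple i) v) = BfL M u v := by
  rw [hρ, hρ]
  have he : BfL M (Finsupp.single i (1:ℝ)) (Finsupp.single i (1:ℝ)) = 1 := by
    rw [BfL_single_single, geomK_diag]; ring
  simp only [map_sub, map_smul, LinearMap.sub_apply, LinearMap.smul_apply, smul_eq_mul,
    geomPair_eq_BfL]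
  rw [BfL_symm (Finsupp.single i 1) v, he]
  ring

theorem BfL_rho (w : W) (u v : B →₀ ℝ) :
    BfL M (ρ w u) (ρ w v) = BfL M u v := by
  obtain ⟨ω, rfl⟩ := cs.wordProd_surjective w
  induction ω generalizing u v with
  | nil => simp [CoxeterSystem.wordProd_nil]
  | cons i ω ih =>
    rw [cs.wordProd_cons, map_mul, lequiv_mul_apply, lequiv_mul_apply,
      BfL_reflect cs ρ hρ, ih]

end Rep


section Main

variable {W : Type*} [Group W]

theorem chain (cs : CoxeterSystem M W) (n : ℕ) : ∀ w : W, cs.length w ≤ n → ∀ s t : B, s ≠ t →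
    cs.length w < cs.length (w * cs.simple s) → cs.length (w * cs.simple t) < cs.length w →
    ∃ k v, 1 ≤ k ∧ w = v * cs.wordProd (alternatingWord s t k) ∧
      cs.length v + k = cs.length w ∧
      cs.length v < cs.length (v * cs.simple s) ∧ cs.length v < cs.length (v * cs.simple t) := by
  induction n with
  | zero =>
    intro w hw s t _ _ hlt
    omega
  | succ n ih =>
    intro w hw s t hst hs ht
    set w₁ := w * cs.simple t with hw₁
    have hw₁w : w₁ * cs.simple t = w := cs.simple_mul_simple_cancel_right t
    have hlen1 : cs.length w₁ + 1 = cs.length w := by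
      rcases cs.length_mul_simple w t with h | h <;> rw [← hw₁] at h <;> omega
    by_cases hcase : cs.length w₁ < cs.length (w₁ * cs.simple s)
    · refine ⟨1, w₁, le_refl 1, ?_, by omega, hcase, ?_⟩
      · have h1 : alternatingWord s t 1 = [t] := rfl
        rw [h1, cs.wordProd_singleton, hw₁w]
      · rw [hw₁w]; omega
    · have hs1 : cs.length (w₁ * cs.simple s) < cs.length w₁ :=
        lt_of_le_of_ne (not_lt.mp hcase) (cs.length_mul_simple_ne w₁ s)
      have hwt : cs.length w₁ < cs.length (w₁ * cs.simple t) := by rw [hw₁w]; omega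
      obtain ⟨k, v, hk, heq, hlen, hvt', hvs'⟩ := ih w₁ (by omega) t s hst.symm hwt hs1
      refine ⟨k + 1, v, by omega, ?_, by omega, hvs', hvt'⟩
      rw [alternatingWord_succ, cs.wordProd_concat, ← mul_assoc, ← heq, hw₁w]


end Main

section AltFormula

variable {W : Type*} [Group W] (cs : CoxeterSystem M W)
  (ρ : W →* ((B →₀ ℝ) ≃ₗ[ℝ] (B →₀ ℝ)))
  (hρ : ∀ (i : B) (v : B →₀ ℝ),
      ρ (cs.simple i) v = v - (2 * geomPair M v i) • Finsupp.single i 1)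

include hρ

theorem alt_formula (k : ℕ) (hk : 1 ≤ k) : ∀ s t : B, s ≠ t →
    ρ (cs.wordProd (alternatingWord s t k)) (Finsupp.single s 1)
      = chebS (-geomK M s t) (if Even k then k+1 else k) • (Finsupp.single s 1 : B →₀ ℝ)
        + chebS (-geomK M s t) (if Even k then k else k+1) • Finsupp.single t 1
    ∧ ρ (cs.wordProd (alternatingWord s t k)) (Finsupp.single t 1)
      = -(chebS (-geomK M s t) (if Even k then k else k-1)) • (Finsupp.single s 1 : B →₀ ℝ)
        + -(chebS (-geomK M s t) (if Even k then k-1 else k)) • Finsupp.single t 1 := by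
  induction k, hk using Nat.le_induction with
  | base =>
    intro s t hst
    have h1 : alternatingWord s t 1 = [t] := rfl
    rw [h1, cs.wordProd_singleton]
    constructor
    · rw [rho_simple_single cs ρ hρ t s]
      have e2 : chebS (-geomK M s t) 2 = 2 * (-geomK M s t) := by
        rw [chebS_rec]; rw [chebS_zero, chebS_one']; ring
      simp only [if_neg (by decide : ¬ Even 1), e2, chebS_one']
      module
    · rw [rho_simple_single_self cs ρ hρ t]
      simp only [if_neg (by decide : ¬ Even 1)]
      norm_num [chebS_zero, chebS_one']
  | succ k hk ih =>
    intro s t hst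
    obtain ⟨hIt, hIs⟩ := ih t s hst.symm
    rw [geomK_symm M t s] at hIt hIs
    set c := -geomK M s t with hc
    have hrec : ∀ n, chebS c (n+2) = 2*c*chebS c (n+1) - chebS c n := fun n => chebS_rec c n
    rw [alternatingWord_succ, cs.wordProd_concat, map_mul]
    simp only [lequiv_mul_apply]
    rw [rho_simple_single cs ρ hρ t s, rho_simple_single_self cs ρ hρ t]
    rw [map_sub, map_smul, map_neg, hIt, hIs]
    obtain ⟨j, rfl⟩ : ∃ j, k = j + 1 := ⟨k - 1, by omega⟩
    rcases Nat.even_or_odd j with hj | hj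
    · have h1 : ¬ Even (j+1) := by simp [Nat.even_add_one, hj]
      have h2 : Even (j+2) := by simpa [Nat.even_add_one] using h1
      simp only [if_neg h1, if_pos h2, Nat.add_sub_cancel]
      constructor
      · rw [show j+1+1+1 = (j+1)+2 by ring, hrec (j+1), show j+1+1 = j+2 by ring, hrec j]
        have hcK : geomK M s t = -c := by rw [hc]; ring
        rw [hcK]
        module
      · rw [show j+1+1 = j+2 by ring, hrec j]
        module
    · have h1 : Even (j+1) := by simpa [Nat.even_add_one, Nat.not_even_iff_odd] using hj
      have h2 : ¬ Even (j+2) := by simp [Nat.even_add_one, h1]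
      simp only [if_pos h1, if_neg h2, Nat.add_sub_cancel]
      constructor
      · rw [show j+1+1+1 = (j+1)+2 by ring, hrec (j+1), show j+1+1 = j+2 by ring, hrec j]
        have hcK : geomK M s t = -c := by rw [hc]; ring
        rw [hcK]
        module
      · rw [show j+1+1 = j+2 by ring, hrec j]
        module

end AltFormula

section Positivity

theorem coeff_nonneg (s t : B) (k : ℕ) (hk : 1 ≤ k) (hkM : M s t = 0 ∨ k + 1 ≤ M s t)
    {n : ℕ} (hn : n ≤ k + 1) : 0 ≤ chebS (-geomK M s t) n := by
  rcases hkM with hM0 | hMk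
  · have hc : -geomK M s t = 1 := by unfold geomK; rw [if_pos hM0]; norm_num
    rw [hc, chebS_one]; positivity
  · have hM0 : M s t ≠ 0 := by omega
    have hM2 : 2 ≤ M s t := by omega
    set θ := Real.pi / (M s t : ℝ) with hθ
    have hMr : (2:ℝ) ≤ (M s t : ℝ) := by exact_mod_cast hM2
    have hθpos : 0 < θ := by rw [hθ]; exact div_pos Real.pi_pos (by linarith)
    have hθlt : θ < Real.pi := by rw [hθ]; exact div_lt_self Real.pi_pos (by linarith)
    have hsin : 0 < Real.sin θ := Real.sin_pos_of_pos_of_lt_pi hθpos hθlt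
    have hc : -geomK M s t = Real.cos θ := by
      unfold geomK; rw [if_neg hM0, neg_neg, hθ]
    have hkey := chebS_sin θ n
    have hnM : (n:ℝ) ≤ (M s t : ℝ) := by exact_mod_cast le_trans hn hMk
    have hnle : (n:ℝ) * θ ≤ Real.pi := by
      rw [hθ]
      calc (n:ℝ) * (Real.pi / (M s t : ℝ))
          ≤ (M s t : ℝ) * (Real.pi / (M s t : ℝ)) :=
            mul_le_mul_of_nonneg_right hnM (le_of_lt (div_pos Real.pi_pos (by linarith)))
        _ = Real.pi := by field_simp
    have hsn : 0 ≤ Real.sin ((n:ℝ)*θ) :=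
      Real.sin_nonneg_of_nonneg_of_le_pi (by positivity) hnle
    rw [hc]
    nlinarith [hkey, hsin, hsn]

variable {W : Type*} [Group W] (cs : CoxeterSystem M W)
  (ρ : W →* ((B →₀ ℝ) ≃ₗ[ℝ] (B →₀ ℝ)))
  (hρ : ∀ (i : B) (v : B →₀ ℝ),
      ρ (cs.simple i) v = v - (2 * geomPair M v i) • Finsupp.single i 1)

include hρ

theorem rho_pos (n : ℕ) : ∀ w : W, cs.length w ≤ n → ∀ i : B,
    cs.length w < cs.length (w * cs.simple i) →
    ∀ j, 0 ≤ (ρ w (Finsupp.single i 1)) j := by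
  induction n with
  | zero =>
    intro w hw i _ j
    have h1 : w = 1 := cs.length_eq_zero_iff.mp (by omega)
    subst h1
    rw [map_one]
    show (0:ℝ) ≤ (Finsupp.single i 1 : B →₀ ℝ) j
    rcases eq_or_ne i j with rfl | hne
    · simp
    · simp [Finsupp.single_eq_of_ne' hne]
  | succ n ih =>
    intro w hw i hi j
    by_cases h0 : cs.length w = 0
    · have h1 : w = 1 := cs.length_eq_zero_iff.mp h0
      subst h1
      rw [map_one]
      show (0:ℝ) ≤ (Finsupp.single i 1 : B →₀ ℝ) j
      rcases eq_or_ne i j with rfl | hne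
      · simp
      · simp [Finsupp.single_eq_of_ne' hne]
    · have hw1 : w ≠ 1 := by
        intro h; rw [h] at h0; exact h0 cs.length_one
      obtain ⟨t, ht⟩ := cs.exists_rightDescent_of_ne_one hw1
      have ht' : cs.length (w * cs.simple t) < cs.length w := ht
      have hit : i ≠ t := by rintro rfl; omega
      obtain ⟨k, v, hk, heq, hlen, hvs, hvt⟩ := chain cs (cs.length w) w le_rfl i t hit hi ht'
      have h3 : cs.length (cs.wordProd (alternatingWord i t k)) ≤ k := by
        have := cs.length_wordProd_le (alternatingWord i t k)
        rwa [length_alternatingWord] at this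
      have hulen : cs.length (cs.wordProd (alternatingWord i t k)) = k := by
        have h2 : cs.length w ≤ cs.length v + cs.length (cs.wordProd (alternatingWord i t k)) := by
          conv_lhs => rw [heq]
          exact cs.length_mul_le _ _
        omega
      have hkM : M.M i t = 0 ∨ k + 1 ≤ M.M i t := by
        by_cases hM0 : M.M i t = 0
        · exact Or.inl hM0
        right
        have hkle : k ≤ M.M i t := by
          by_contra hgt
          push_neg at hgt
          refine cs.not_isReduced_alternatingWord i t hM0 hgt ?_
          rw [CoxeterSystem.IsReduced, hulen, length_alternatingWord]
        rcases lt_or_eq_of_le hkle with h | h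
        · omega
        exfalso
        obtain ⟨j', rfl⟩ : ∃ j', k = j' + 1 := ⟨k - 1, by omega⟩
        have hbraid : cs.wordProd (alternatingWord i t (j'+1)) =
            cs.wordProd (alternatingWord t i (j'+1)) := by
          have hb := cs.wordProd_braidWord_eq i t
          unfold CoxeterSystem.braidWord at hb
          rw [M.symmetric t i] at hb
          rw [← h] at hb
          exact hb
        have hws : w * cs.simple i = v * cs.wordProd (alternatingWord i t j') := by
          rw [heq, hbraid, alternatingWord_succ, cs.wordProd_concat]
          rw [mul_assoc v _ _, cs.simple_mul_simple_cancel_right]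
        have hle2 : cs.length (w * cs.simple i) ≤ cs.length v + j' := by
          rw [hws]
          calc cs.length (v * cs.wordProd (alternatingWord i t j'))
              ≤ cs.length v + cs.length (cs.wordProd (alternatingWord i t j')) :=
                cs.length_mul_le _ _
            _ ≤ cs.length v + j' := by
                have := cs.length_wordProd_le (alternatingWord i t j')
                rw [length_alternatingWord] at this
                omega
        omega
      obtain ⟨hform, -⟩ := alt_formula cs ρ hρ k hk i t hit
      have hwρ : ρ w (Finsupp.single i 1)
          = ρ v (ρ (cs.wordProd (alternatingWord i t k)) (Finsupp.single i 1)) := by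
        rw [heq, map_mul, lequiv_mul_apply]
      rw [hwρ, hform, map_add, map_smul, map_smul, Finsupp.add_apply,
        Finsupp.smul_apply, Finsupp.smul_apply, smul_eq_mul, smul_eq_mul]
      have hvi : 0 ≤ (ρ v (Finsupp.single i 1)) j := ih v (by omega) i hvs j
      have hvt2 : 0 ≤ (ρ v (Finsupp.single t 1)) j := ih v (by omega) t hvt j
      have hc1 : 0 ≤ chebS (-geomK M i t) (if Even k then k+1 else k) :=
        coeff_nonneg i t k hk hkM (by split <;> omega)
      have hc2 : 0 ≤ chebS (-geomK M i t) (if Even k then k else k+1) :=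
        coeff_nonneg i t k hk hkM (by split <;> omega)
      exact add_nonneg (mul_nonneg hc1 hvi) (mul_nonneg hc2 hvt2)

/-- Positivity: if `ℓ(w sᵢ) > ℓ(w)` then `w(αᵢ)` has nonnegative coordinates. -/
theorem rho_pos' (w : W) (i : B) (h : cs.length w < cs.length (w * cs.simple i)) :
    ∀ j, 0 ≤ (ρ w (Finsupp.single i 1)) j :=
  rho_pos cs ρ hρ (cs.length w) w le_rfl i h

end Positivity

section Final

variable {W : Type*} [Group W] (cs : CoxeterSystem M W)
  (ρ : W →* ((B →₀ ℝ) ≃ₗ[ℝ] (B →₀ ℝ)))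

theorem apply_coord (e : (B →₀ ℝ) ≃ₗ[ℝ] (B →₀ ℝ)) (u : B →₀ ℝ) (j : B) :
    (e u) j = u.sum fun i a => a * (e (Finsupp.single i 1)) j := by
  conv_lhs => rw [← Finsupp.sum_single u]
  rw [map_finsuppSum, Finsupp.sum_apply]
  apply Finsupp.sum_congr
  intro i _
  rw [show Finsupp.single i (u i) = u i • Finsupp.single i (1:ℝ) from by
    rw [Finsupp.smul_single, smul_eq_mul, mul_one], map_smul, Finsupp.smul_apply, smul_eq_mul]

variable (hρ : ∀ (i : B) (v : B →₀ ℝ),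
      ρ (cs.simple i) v = v - (2 * geomPair M v i) • Finsupp.single i 1)

include hρ

theorem rho_inv_pos (y : W) (i : B) (h : cs.length y < cs.length (cs.simple i * y)) :
    ∀ j, 0 ≤ (ρ y⁻¹ (Finsupp.single i 1)) j := by
  apply rho_pos' cs ρ hρ y⁻¹ i
  have h2 : cs.length (y⁻¹ * cs.simple i) = cs.length (cs.simple i * y) := by
    rw [← cs.length_inv (y⁻¹ * cs.simple i), mul_inv_rev, inv_inv, cs.inv_simple]
  rw [cs.length_inv, h2]
  exact h

theorem rho_inv_neg (y : W) (i : B) (h : cs.length (cs.simple i * y) < cs.length y) :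
    ∀ j, (ρ y⁻¹ (Finsupp.single i 1)) j ≤ 0 := by
  intro j
  set z := y⁻¹ * cs.simple i with hzdef
  have hz : z * cs.simple i = y⁻¹ := by
    rw [hzdef, mul_assoc, cs.simple_mul_simple_self, mul_one]
  have hzlen : cs.length z = cs.length (cs.simple i * y) := by
    rw [hzdef, ← cs.length_inv (y⁻¹ * cs.simple i), mul_inv_rev, inv_inv, cs.inv_simple]
  have hlen : cs.length z < cs.length (z * cs.simple i) := by
    rw [hz, cs.length_inv, hzlen]
    exact h
  have hp := rho_pos' cs ρ hρ z i hlen j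
  have : ρ y⁻¹ (Finsupp.single i 1) = -(ρ z (Finsupp.single i 1)) := by
    rw [← hz, map_mul, lequiv_mul_apply, rho_simple_single_self cs ρ hρ, map_neg]
  rw [this, Finsupp.neg_apply]
  linarith

end Final

end Stmt2Aux

open Stmt2Aux

/-- The parabolic property: given the geometric representation `ρ` of `(W,S)`
(the simple root `α_i` is the basis vector `Finsupp.single i 1`, and a simple
reflection acts by `s_i(v) = v - 2 B(v, α_i) α_i`), for `x ∈ ᴵW` and `s ∈ S`,
the following are equivalent: `xs ∉ ᴵW`; `x(α_s) ∈ Δ_I`; `x(α_s)` is a root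
lying in the span of `Δ_I`. -/
theorem stmt2 {B W : Type*} [Group W] {M : CoxeterMatrix B} (cs : CoxeterSystem M W)
    (I : Set B)
    (ρ : W →* ((B →₀ ℝ) ≃ₗ[ℝ] (B →₀ ℝ)))
    (hρ : ∀ (i : B) (v : B →₀ ℝ),
      ρ (cs.simple i) v = v - (2 * geomPair M v i) • Finsupp.single i 1)
    (x : W) (hx : x ∈ minCosetReps cs I) (s : B) :
    List.TFAE
      [ x * cs.simple s ∉ minCosetReps cs I,
        ρ x (Finsupp.single s 1) ∈ (fun r => (Finsupp.single r 1 : B →₀ ℝ)) '' I,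
        (∃ (w : W) (j : B), ρ x (Finsupp.single s 1) = ρ w (Finsupp.single j 1)) ∧
          ρ x (Finsupp.single s 1) ∈
            Submodule.span ℝ ((fun r => (Finsupp.single r 1 : B →₀ ℝ)) '' I) ] := by
  have hx' : ∀ i ∈ I, cs.length x < cs.length (cs.simple i * x) := hx
  tfae_have 1 → 2 := by
    intro h1
    simp only [minCosetReps, Set.mem_setOf_eq, not_forall, not_lt] at h1
    obtain ⟨i, hiI, hle⟩ := h1
    have hlt : cs.length (cs.simple i * (x * cs.simple s)) < cs.length (x * cs.simple s) :=
      lt_of_le_of_ne hle (cs.length_simple_mul_ne (x * cs.simple s) i)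
    set β := ρ x⁻¹ (Finsupp.single i 1) with hβ
    have hβpos : ∀ j, 0 ≤ β j := rho_inv_pos cs ρ hρ x i (hx' i hiI)
    have hneg : ∀ j, (ρ (x * cs.simple s)⁻¹ (Finsupp.single i 1)) j ≤ 0 :=
      rho_inv_neg cs ρ hρ (x * cs.simple s) i hlt
    have hcomp : ρ (x * cs.simple s)⁻¹ (Finsupp.single i 1) = ρ (cs.simple s) β := by
      rw [hβ, ← lequiv_mul_apply, ← map_mul, mul_inv_rev, cs.inv_simple]
    have hneg' : ∀ j, (ρ (cs.simple s) β) j ≤ 0 := by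
      intro j; rw [← hcomp]; exact hneg j
    have hβzero : ∀ j, j ≠ s → β j = 0 := by
      intro j hjs
      have h2 := hneg' j
      rw [hρ, Finsupp.sub_apply, Finsupp.smul_apply, Finsupp.single_eq_of_ne' (Ne.symm hjs),
        smul_zero] at h2
      have h3 := hβpos j
      linarith
    have hβeq : β = Finsupp.single s (β s) := by
      ext j
      rcases eq_or_ne j s with rfl | hjs
      · rw [Finsupp.single_eq_same]
      · rw [Finsupp.single_eq_of_ne' (Ne.symm hjs), hβzero j hjs]
    have hnorm : BfL M β β = 1 := by
      rw [hβ, BfL_rho cs ρ hρ, BfL_single_single, geomK_diag]; ring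
    have hβs1 : β s = 1 := by
      have h2 : BfL M β β = β s * β s := by
        conv_lhs => rw [hβeq]
        rw [BfL_single_single, geomK_diag]; ring
      have h4 := hβpos s
      nlinarith [h2, hnorm]
    have hfin : ρ x (Finsupp.single s 1) = Finsupp.single i 1 := by
      have h5 : β = Finsupp.single s 1 := by rw [hβeq, hβs1]
      calc ρ x (Finsupp.single s 1) = ρ x β := by rw [h5]
        _ = ρ x (ρ x⁻¹ (Finsupp.single i 1)) := by rw [hβ]
        _ = Finsupp.single i 1 := by
            rw [← lequiv_mul_apply, ← map_mul, mul_inv_cancel, map_one]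
            rfl
    exact ⟨i, hiI, hfin.symm⟩
  tfae_have 2 → 3 := by
    rintro ⟨i, hiI, hieq⟩
    refine ⟨⟨x, s, rfl⟩, ?_⟩
    rw [← hieq]
    exact Submodule.subset_span ⟨i, hiI, rfl⟩
  tfae_have 3 → 1 := by
    rintro ⟨⟨w, jj, hroot⟩, hspan⟩ hmem
    have hmem' : ∀ i ∈ I, cs.length (x * cs.simple s) <
        cs.length (cs.simple i * (x * cs.simple s)) := hmem
    set v := ρ x (Finsupp.single s 1) with hv
    have hsupp : ∀ i, v i ≠ 0 → i ∈ I := by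
      have hv2 : v ∈ Finsupp.supported ℝ ℝ I := by
        rw [Finsupp.supported_eq_span_single]; exact hspan
      intro i hi
      exact (Finsupp.mem_supported ℝ v).mp hv2 (Finsupp.mem_support_iff.mpr hi)
    have hdich : (∀ j, 0 ≤ v j) ∨ (∀ j, v j ≤ 0) := by
      rcases lt_or_gt_of_ne (cs.length_mul_simple_ne w jj) with hlt | hgt
      · right
        intro j
        have hw2 : cs.length (w * cs.simple jj) <
            cs.length ((w * cs.simple jj) * cs.simple jj) := by
          rw [cs.simple_mul_simple_cancel_right]; exact hlt
        have hp := rho_pos' cs ρ hρ (w * cs.simple jj) jj hw2 j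
        have heq2 : v = -(ρ (w * cs.simple jj) (Finsupp.single jj 1)) := by
          rw [hroot]
          conv_lhs => rw [show w = (w * cs.simple jj) * cs.simple jj from
            (cs.simple_mul_simple_cancel_right jj).symm]
          rw [map_mul, lequiv_mul_apply, rho_simple_single_self cs ρ hρ, map_neg]
        rw [heq2, Finsupp.neg_apply]; linarith
      · left
        intro j
        have := rho_pos' cs ρ hρ w jj hgt j
        rw [hroot]; exact this
    rcases hdich with hpos | hneg
    · have hsv : ρ (x * cs.simple s)⁻¹ v = -(Finsupp.single s 1) := by
        rw [hv, ← lequiv_mul_apply, ← map_mul]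
        have hgrp : (x * cs.simple s)⁻¹ * x = cs.simple s := by
          rw [mul_inv_rev, cs.inv_simple, mul_assoc, inv_mul_cancel, mul_one]
        rw [hgrp, rho_simple_single_self cs ρ hρ]
      have hcoord := apply_coord (ρ (x * cs.simple s)⁻¹) v s
      rw [hsv] at hcoord
      have hL : ((-(Finsupp.single s 1) : B →₀ ℝ)) s = -1 := by
        rw [Finsupp.neg_apply, Finsupp.single_eq_same]
      have hterm : ∀ i ∈ v.support, 0 ≤ v i * (ρ (x * cs.simple s)⁻¹ (Finsupp.single i 1)) s := by
        intro i hi2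
        have hiI := hsupp i (Finsupp.mem_support_iff.mp hi2)
        have h6 := rho_inv_pos cs ρ hρ (x * cs.simple s) i (hmem' i hiI)
        exact mul_nonneg (hpos i) (h6 s)
      have hge : (0:ℝ) ≤ v.sum fun i a => a * (ρ (x * cs.simple s)⁻¹ (Finsupp.single i 1)) s :=
        Finset.sum_nonneg hterm
      rw [← hcoord, hL] at hge
      linarith
    · have hsv : ρ x⁻¹ v = Finsupp.single s 1 := by
        rw [hv, ← lequiv_mul_apply, ← map_mul, inv_mul_cancel, map_one]
        rfl
      have hcoord := apply_coord (ρ x⁻¹) v s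
      rw [hsv, Finsupp.single_eq_same] at hcoord
      have hterm : ∀ i ∈ v.support, v i * (ρ x⁻¹ (Finsupp.single i 1)) s ≤ 0 := by
        intro i hi2
        have hiI := hsupp i (Finsupp.mem_support_iff.mp hi2)
        have h6 := rho_inv_pos cs ρ hρ x i (hx' i hiI)
        exact mul_nonpos_of_nonpos_of_nonneg (hneg i) (h6 s)
      have hle : (v.sum fun i a => a * (ρ x⁻¹ (Finsupp.single i 1)) s) ≤ 0 :=
        Finset.sum_nonpos hterm
      rw [← hcoord] at hle
      linarith
  tfae_finish
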